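/- Let h : 𝒞 → ℝ and let v₁ ∈ V(G) \ {s,t}. Then h(C) = 0 for all cuts C not crossed by the edge v₁ → t (i.e., all cuts with v₁ ∈ R(C)) if and only if h can be written in the form Σ_{V ⊆ V(G)\{s,t,v₁}} c_V (e_V − e_{V ∪ {v₁}}). -/

import Mathlib

/-- An s-t cut: each vertex is assigned to the left side (`true`) or right side (`false`),
with `s` on the left and `t` on the right. -/
abbrev STCut (V : Type*) (s t : V) := {C : V → Bool // C s = true ∧ C t = false}

/-- The Fourier basis function `e_W(C) = (-1)^{|W ∩ L(C)|}`. -/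
def eFun {V : Type*} [DecidableEq V] {s t : V} (W : Finset V) (C : STCut V s t) : ℝ :=
  (-1 : ℝ) ^ (W.filter (fun v => C.1 v = true)).card

lemma eFun_prod {V : Type*} [DecidableEq V] {s t : V} (W : Finset V) (C : STCut V s t) :
    eFun W C = ∏ v ∈ W, (if C.1 v = true then (-1 : ℝ) else 1) := by
  rw [Finset.prod_ite, Finset.prod_const, Finset.prod_const, one_pow, mul_one, eFun]

lemma eFun_insert {V : Type*} [DecidableEq V] {s t v₁ : V} (W : Finset V) (hv : v₁ ∉ W)
    (C : STCut V s t) :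
    eFun (insert v₁ W) C = (if C.1 v₁ = true then (-1:ℝ) else 1) * eFun W C := by
  rw [eFun_prod, eFun_prod, Finset.prod_insert hv]

lemma orth {V : Type*} [Fintype V] [DecidableEq V] {s t v₁ : V}
    (C C₀ : STCut V s t) (hv : C.1 v₁ = C₀.1 v₁) :
    ∑ W ∈ (Finset.univ \ {s, t, v₁} : Finset V).powerset, eFun W C * eFun W C₀
      = if C = C₀ then (2:ℝ) ^ (Finset.univ \ {s, t, v₁} : Finset V).card else 0 := by
  set U : Finset V := Finset.univ \ {s, t, v₁} with hU
  set g : V → ℝ := fun v => (if C.1 v = true then (-1:ℝ) else 1) * (if C₀.1 v = true then (-1:ℝ) else 1) with hg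
  have key : ∑ W ∈ U.powerset, eFun W C * eFun W C₀ = ∏ v ∈ U, (g v + 1) := by
    rw [Finset.prod_add]
    refine Finset.sum_congr rfl fun W _ => ?_
    rw [eFun_prod, eFun_prod, ← Finset.prod_mul_distrib, Finset.prod_const_one, mul_one]
  rw [key]
  by_cases hC : C = C₀
  · subst hC
    rw [if_pos rfl]
    have h2 : ∀ v ∈ U, g v + 1 = 2 := by
      intro v _
      rcases Bool.eq_false_or_eq_true (C.1 v) with h1 | h1 <;> simp [hg, h1] <;> ring
    rw [Finset.prod_congr rfl h2, Finset.prod_const]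
  · rw [if_neg hC]
    have : ∃ v ∈ U, C.1 v ≠ C₀.1 v := by
      by_contra hcon
      push_neg at hcon
      apply hC
      apply Subtype.ext; funext v
      by_cases hvU : v ∈ U
      · exact hcon v hvU
      · simp only [hU, Finset.mem_sdiff, Finset.mem_univ, true_and, not_not,
          Finset.mem_insert, Finset.mem_singleton] at hvU
        rcases hvU with rfl | rfl | rfl
        · rw [C.2.1, C₀.2.1]
        · rw [C.2.2, C₀.2.2]
        · exact hv
    obtain ⟨v, hvU, hne⟩ := this
    refine Finset.prod_eq_zero hvU ?_
    have : g v = -1 := by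
      rcases Bool.eq_false_or_eq_true (C.1 v) with h1 | h1 <;>
        rcases Bool.eq_false_or_eq_true (C₀.1 v) with h2 | h2 <;>
        simp_all [hg]
    rw [this]; ring

lemma filter_eq_powerset {V : Type*} [Fintype V] [DecidableEq V] (s t v₁ : V) :
    Finset.univ.filter (fun W : Finset V => s ∉ W ∧ t ∉ W ∧ v₁ ∉ W)
      = (Finset.univ \ {s, t, v₁} : Finset V).powerset := by
  ext W
  simp only [Finset.mem_filter, Finset.mem_univ, true_and, Finset.mem_powerset,
    Finset.subset_iff, Finset.mem_sdiff, Finset.mem_insert, Finset.mem_singleton]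
  constructor
  · rintro ⟨h1, h2, h3⟩ x hx
    rintro (rfl | rfl | rfl) <;> tauto
  · intro hsub
    exact ⟨fun hs => hsub hs (Or.inl rfl), fun ht => hsub ht (Or.inr (Or.inl rfl)),
      fun hv => hsub hv (Or.inr (Or.inr rfl))⟩

theorem stmt3 {V : Type*} [Fintype V] [DecidableEq V] (s t v₁ : V) (hst : s ≠ t)
    (hv₁s : v₁ ≠ s) (hv₁t : v₁ ≠ t) (h : STCut V s t → ℝ) :
    (∀ C : STCut V s t, C.1 v₁ = false → h C = 0) ↔
      ∃ c : Finset V → ℝ,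
        h = ∑ W ∈ Finset.univ.filter (fun W : Finset V => s ∉ W ∧ t ∉ W ∧ v₁ ∉ W),
          c W • ((eFun W : STCut V s t → ℝ) - eFun (insert v₁ W)) := by
  set U : Finset V := Finset.univ \ {s, t, v₁} with hU
  have hv₁U : v₁ ∉ U := by simp [hU]
  have hmem : ∀ W ∈ U.powerset, v₁ ∉ W := fun W hW hv =>
    hv₁U (Finset.mem_powerset.mp hW hv)
  set n := U.card with hn
  constructor
  · intro h0
    refine ⟨fun W => ((2:ℝ) ^ n * 2)⁻¹ *
        ∑ C : STCut V s t, (if C.1 v₁ = true then h C * eFun W C else 0), ?_⟩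
    funext C₀
    rw [Finset.sum_apply, filter_eq_powerset]
    simp only [Pi.smul_apply, Pi.sub_apply, smul_eq_mul]
    by_cases hC₀ : C₀.1 v₁ = true
    · have step : ∀ W ∈ U.powerset,
          (((2:ℝ) ^ n * 2)⁻¹ * ∑ C : STCut V s t, (if C.1 v₁ = true then h C * eFun W C else 0))
              * (eFun W C₀ - eFun (insert v₁ W) C₀)
            = ((2:ℝ) ^ n)⁻¹ * ∑ C : STCut V s t,
                (if C.1 v₁ = true then h C * (eFun W C * eFun W C₀) else 0) := by
        intro W hW
        rw [eFun_insert W (hmem W hW), if_pos hC₀,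
          Finset.mul_sum, Finset.mul_sum]
        have : eFun W C₀ - -1 * eFun W C₀ = 2 * eFun W C₀ := by ring
        rw [this]
        rw [Finset.sum_mul]
        refine Finset.sum_congr rfl fun C _ => ?_
        split_ifs with hCv
        · have h2 : ((2:ℝ)^n * 2) ≠ 0 := by positivity
          field_simp
        · simp
      rw [Finset.sum_congr rfl step, ← Finset.mul_sum, Finset.sum_comm]
      have inner : ∀ C : STCut V s t,
          (∑ W ∈ U.powerset, if C.1 v₁ = true then h C * (eFun W C * eFun W C₀) else 0)
            = if C = C₀ then h C₀ * (2:ℝ) ^ n else 0 := by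
        intro C
        by_cases hCv : C.1 v₁ = true
        · simp only [if_pos hCv, ← Finset.mul_sum]
          rw [orth C C₀ (by rw [hCv, hC₀])]
          split_ifs with hCC
          · subst hCC; rfl
          · ring
        · simp only [if_neg hCv]
          rw [Finset.sum_const_zero]
          have : C ≠ C₀ := fun hcc => hCv (hcc ▸ hC₀)
          rw [if_neg this]
      rw [Finset.sum_congr rfl fun C _ => inner C, Finset.sum_ite_eq' Finset.univ C₀,
        if_pos (Finset.mem_univ C₀)]
      have h2 : ((2:ℝ) ^ n) ≠ 0 := by positivity
      field_simp
    · have hC₀f : C₀.1 v₁ = false := Bool.not_eq_true _ ▸ (by simpa using hC₀)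
      rw [h0 C₀ hC₀f]
      refine (Finset.sum_eq_zero fun W hW => ?_).symm
      rw [eFun_insert W (hmem W hW), if_neg hC₀, one_mul, sub_self, mul_zero]
  · rintro ⟨c, rfl⟩ C hCv
    rw [Finset.sum_apply, filter_eq_powerset]
    refine Finset.sum_eq_zero fun W hW => ?_
    simp only [Pi.smul_apply, Pi.sub_apply, smul_eq_mul]
    rw [eFun_insert W (hmem W hW), hCv]
    simp
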